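/- arXiv:2210.16706 — 6 statements merged into one kernel-verified Lean document; each statement's English description precedes it below -/
import Mathlib

section
/- Let G be the semidirect product (ℤ/8ℤ)ˣ ⋉ ℤ/8ℤ, with underlying set (ℤ/8ℤ)ˣ × ℤ/8ℤ and multiplication (a,b)·(c,d) = (ac, b + a·d). Then the subgroups A = {(1,0), (3,0), (5,0), (7,0)} and B = {(1,0), (3,4), (5,4), (7,0)} of G are not conjugate: there is no g ∈ G with g·A·g⁻¹ = B. -/
/-- The monoid homomorphism from additive automorphisms of `A` to multiplicative
automorphisms of `Multiplicative A`. -/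
def addAutToMulAut (A : Type*) [AddGroup A] : Multiplicative (AddAut A) →* MulAut (Multiplicative A) where
  toFun e := AddEquiv.toMultiplicative (Multiplicative.toAdd e)
  map_one' := rfl
  map_mul' := fun _ _ => rfl

/-- The action of `(ℤ/8ℤ)ˣ` on `ℤ/8ℤ` by multiplication, as a homomorphism to the
automorphism group of `Multiplicative (ℤ/8ℤ)`. -/
def phi8 : (ZMod 8)ˣ →* MulAut (Multiplicative (ZMod 8)) :=
  (addAutToMulAut (ZMod 8)).comp (DistribMulAction.toAddAut (ZMod 8)ˣ (ZMod 8))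

/-- The semidirect product `G = (ℤ/8ℤ)ˣ ⋉ ℤ/8ℤ`, realized with normal factor
`Multiplicative (ℤ/8ℤ)` and acting factor `(ℤ/8ℤ)ˣ`; the multiplication satisfies
`(a, b) * (c, d) = (a * c, b + a • d)` (components written as (unit, additive part)). -/
abbrev G8 := SemidirectProduct (Multiplicative (ZMod 8)) (ZMod 8)ˣ phi8

/-- The element of `G8` corresponding to the pair `(a, b) ∈ (ℤ/8ℤ)ˣ × ℤ/8ℤ`. -/
def g8 (a : (ZMod 8)ˣ) (b : ZMod 8) : G8 := ⟨Multiplicative.ofAdd b, a⟩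

def u1 : (ZMod 8)ˣ := 1
def u3 : (ZMod 8)ˣ := ZMod.unitOfCoprime 3 (by decide)
def u5 : (ZMod 8)ˣ := ZMod.unitOfCoprime 5 (by decide)
def u7 : (ZMod 8)ˣ := ZMod.unitOfCoprime 7 (by decide)

theorem conj_left (g : G8) (a : (ZMod 8)ˣ) :
    (g * g8 a 0 * g⁻¹).left = Multiplicative.ofAdd ((1 - (a : ZMod 8)) * (Multiplicative.toAdd g.left)) := by
  have hphi : ∀ (u : (ZMod 8)ˣ) (x : Multiplicative (ZMod 8)), phi8 u x = Multiplicative.ofAdd ((u : ZMod 8) * Multiplicative.toAdd x) := fun _ _ => rfl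
  simp only [SemidirectProduct.mul_left, SemidirectProduct.inv_left, SemidirectProduct.mul_right, g8, hphi]
  apply Multiplicative.toAdd.injective
  simp only [toAdd_mul, toAdd_ofAdd, toAdd_inv, Units.val_mul]
  have hu : (g.right : ZMod 8) * ((g.right⁻¹ : (ZMod 8)ˣ) : ZMod 8) = 1 := Units.mul_inv g.right
  linear_combination (-(a : ZMod 8) * Multiplicative.toAdd g.left) * hu

theorem conj_right (g : G8) (a : (ZMod 8)ˣ) :
    (g * g8 a 0 * g⁻¹).right = a := by
  simp [SemidirectProduct.mul_right, SemidirectProduct.inv_right, g8, mul_comm]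


/-- **Sunada subgroups of `(ℤ/8ℤ)ˣ ⋉ ℤ/8ℤ` are not conjugate.** There is no `g ∈ G` with
`g • A • g⁻¹ = B`, where `A = {(1,0), (3,0), (5,0), (7,0)}` and
`B = {(1,0), (3,4), (5,4), (7,0)}`. -/
theorem semidirect_not_conjugate (A B : Subgroup G8)
    (hA : (A : Set G8) = {g8 u1 0, g8 u3 0, g8 u5 0, g8 u7 0})
    (hB : (B : Set G8) = {g8 u1 0, g8 u3 4, g8 u5 4, g8 u7 0}) :
    ¬ ∃ g : G8, (fun x => g * x * g⁻¹) '' (A : Set G8) = (B : Set G8) := by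
  rintro ⟨g, hg⟩
  have key : ∀ a : (ZMod 8)ˣ, g8 a 0 ∈ (A : Set G8) →
      g * g8 a 0 * g⁻¹ = g8 u1 0 ∨ g * g8 a 0 * g⁻¹ = g8 u3 4 ∨
      g * g8 a 0 * g⁻¹ = g8 u5 4 ∨ g * g8 a 0 * g⁻¹ = g8 u7 0 := by
    intro a ha
    have : g * g8 a 0 * g⁻¹ ∈ (B : Set G8) := by
      rw [← hg]; exact ⟨g8 a 0, ha, rfl⟩
    rw [hB] at this
    simpa only [Set.mem_insert_iff, Set.mem_singleton_iff] using this
  have mem3 : g8 u3 0 ∈ (A : Set G8) := by rw [hA]; simp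
  have mem5 : g8 u5 0 ∈ (A : Set G8) := by rw [hA]; simp
  have h3 := key u3 mem3
  have h5 := key u5 mem5
  have e3 : (1 - (u3 : ZMod 8)) * (Multiplicative.toAdd g.left) = 4 := by
    rcases h3 with h | h | h | h <;>
      [ (have := congrArg SemidirectProduct.right h; rw [conj_right] at this; exact absurd this (by decide));
        (have := congrArg SemidirectProduct.left h; rw [conj_left] at this; exact Multiplicative.ofAdd.injective this);
        (have := congrArg SemidirectProduct.right h; rw [conj_right] at this; exact absurd this (by decide));
        (have := congrArg SemidirectProduct.right h; rw [conj_right] at this; exact absurd this (by decide))]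
  have e5 : (1 - (u5 : ZMod 8)) * (Multiplicative.toAdd g.left) = 4 := by
    rcases h5 with h | h | h | h <;>
      [ (have := congrArg SemidirectProduct.right h; rw [conj_right] at this; exact absurd this (by decide));
        (have := congrArg SemidirectProduct.right h; rw [conj_right] at this; exact absurd this (by decide));
        (have := congrArg SemidirectProduct.left h; rw [conj_left] at this; exact Multiplicative.ofAdd.injective this);
        (have := congrArg SemidirectProduct.right h; rw [conj_right] at this; exact absurd this (by decide))]
  have final : ∀ t : ZMod 8, ¬((1 - (u3 : ZMod 8)) * t = 4 ∧ (1 - (u5 : ZMod 8)) * t = 4) := by decide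
  exact final _ ⟨e3, e5⟩
end

section
/- In G = SL₃(𝔽₂), the opposite parabolic subgroups A = {a ∈ SL₃(𝔽₂) : a₂₁ = a₃₁ = 0} and B = {b ∈ SL₃(𝔽₂) : b₁₂ = b₁₃ = 0} (B is the set of transposes of elements of A) are almost conjugate: for every g ∈ G, the number of elements of A conjugate in G to g equals the number of elements of B conjugate in G to g. -/
/-- `SL₃(𝔽₂)`, the special linear group of 3×3 matrices over the field with two elements. -/
abbrev SL3F2 := Matrix.SpecialLinearGroup (Fin 3) (ZMod 2)

namespace SL3aux

instance : DecidableEq SL3F2 := fun _ _ => decidable_of_iff _ Subtype.ext_iff.symm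
def CS : List SL3F2 := [
    ⟨!![0, 1, 1; 1, 0, 0; 1, 0, 1], by decide⟩,
    ⟨!![1, 0, 0; 0, 0, 1; 0, 1, 1], by decide⟩,
    ⟨!![1, 0, 1; 0, 0, 1; 1, 1, 1], by decide⟩,
    ⟨!![1, 1, 0; 1, 0, 0; 0, 0, 1], by decide⟩,
    ⟨!![0, 1, 0; 1, 0, 0; 0, 0, 1], by decide⟩,
    ⟨!![0, 1, 1; 1, 1, 1; 1, 1, 0], by decide⟩,
    ⟨!![1, 1, 1; 1, 0, 1; 1, 1, 0], by decide⟩,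
    ⟨!![0, 0, 1; 0, 1, 1; 1, 1, 0], by decide⟩,
    ⟨!![0, 1, 0; 1, 1, 1; 0, 1, 1], by decide⟩,
    ⟨!![1, 0, 0; 0, 1, 1; 0, 1, 0], by decide⟩,
    ⟨!![1, 0, 0; 0, 0, 1; 0, 1, 0], by decide⟩,
    ⟨!![0, 1, 1; 1, 1, 0; 1, 0, 0], by decide⟩,
    ⟨!![1, 1, 1; 1, 1, 0; 1, 0, 0], by decide⟩,
    ⟨!![1, 1, 0; 1, 1, 1; 0, 1, 0], by decide⟩,
    ⟨!![1, 1, 0; 1, 0, 1; 0, 1, 0], by decide⟩,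
    ⟨!![1, 0, 1; 0, 0, 1; 1, 1, 0], by decide⟩,
    ⟨!![1, 1, 1; 1, 0, 0; 1, 0, 1], by decide⟩,
    ⟨!![1, 0, 1; 0, 1, 0; 1, 0, 0], by decide⟩,
    ⟨!![0, 0, 1; 0, 1, 0; 1, 0, 0], by decide⟩]
set_option maxRecDepth 1000000 in
set_option maxHeartbeats 2000000 in
lemma conj_transpose_sl3' : ∀ g : SL3F2, ∃ c ∈ CS, c * g = g.transpose * c := by decide

lemma conj_transpose_sl3 : ∀ g : SL3F2, ∃ c : SL3F2, c * g = Matrix.SpecialLinearGroup.transpose g * c := by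
  intro g
  obtain ⟨c, -, hc⟩ := conj_transpose_sl3' g
  exact ⟨c, hc⟩

open Matrix.SpecialLinearGroup

lemma T_mul (a b : SL3F2) : (a * b).transpose = b.transpose * a.transpose :=
  Subtype.ext (by simp [transpose, Matrix.transpose_mul]; rfl)

lemma T_T (a : SL3F2) : a.transpose.transpose = a := Subtype.ext rfl

lemma T_one : (1 : SL3F2).transpose = 1 := Subtype.ext (by simp [transpose])

lemma isConj_transpose (g : SL3F2) : IsConj g g.transpose := by
  obtain ⟨c, hc⟩ := conj_transpose_sl3 g
  rw [isConj_iff]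
  exact ⟨c, by rw [hc]; group⟩

end SL3aux

/-- **Opposite parabolics in `SL₃(𝔽₂)` are almost conjugate.** The subgroups
`A = {a : a₂₁ = a₃₁ = 0}` and `B = {b : b₁₂ = b₁₃ = 0}` (entries written 1-indexed) are
almost conjugate: for every `g ∈ SL₃(𝔽₂)`, the number of elements of `A` conjugate to `g`
equals the number of elements of `B` conjugate to `g`. -/
theorem sl3_parabolics_almost_conjugate (A B : Subgroup SL3F2)
    (hA : (A : Set SL3F2) =
      {a : SL3F2 | (a : Matrix (Fin 3) (Fin 3) (ZMod 2)) 1 0 = 0 ∧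
        (a : Matrix (Fin 3) (Fin 3) (ZMod 2)) 2 0 = 0})
    (hB : (B : Set SL3F2) =
      {b : SL3F2 | (b : Matrix (Fin 3) (Fin 3) (ZMod 2)) 0 1 = 0 ∧
        (b : Matrix (Fin 3) (Fin 3) (ZMod 2)) 0 2 = 0}) :
    ∀ g : SL3F2,
      Nat.card {a : SL3F2 // a ∈ A ∧ IsConj a g} =
      Nat.card {b : SL3F2 // b ∈ B ∧ IsConj b g} := by
  intro g
  have memA : ∀ x : SL3F2, x ∈ A ↔
      ((x : Matrix (Fin 3) (Fin 3) (ZMod 2)) 1 0 = 0 ∧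
       (x : Matrix (Fin 3) (Fin 3) (ZMod 2)) 2 0 = 0) := by
    intro x
    rw [← SetLike.mem_coe, hA]; rfl
  have memB : ∀ x : SL3F2, x ∈ B ↔
      ((x : Matrix (Fin 3) (Fin 3) (ZMod 2)) 0 1 = 0 ∧
       (x : Matrix (Fin 3) (Fin 3) (ZMod 2)) 0 2 = 0) := by
    intro x
    rw [← SetLike.mem_coe, hB]; rfl
  have key : ∀ x : SL3F2, IsConj x g ↔ IsConj x.transpose g := by
    intro x
    constructor
    · intro h
      exact (SL3aux.isConj_transpose x).symm.trans h
    · intro h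
      exact (SL3aux.isConj_transpose x).trans h
  refine Nat.card_congr ⟨fun x => ⟨x.1.transpose, ?_, ?_⟩, fun y => ⟨y.1.transpose, ?_, ?_⟩,
    fun x => Subtype.ext (SL3aux.T_T x.1), fun y => Subtype.ext (SL3aux.T_T y.1)⟩
  · rw [memB]
    exact (memA x.1).mp x.2.1
  · exact ((key x.1).mp x.2.2)
  · rw [memA]
    exact (memB y.1).mp y.2.1
  · exact ((key y.1).mp y.2.2)
end

section
/- In G = SL₃(𝔽₂), the subgroups A = {a ∈ SL₃(𝔽₂) : a₂₁ = a₃₁ = 0} and B = {b ∈ SL₃(𝔽₂) : b₁₂ = b₁₃ = 0} are not conjugate: there is no g ∈ G with g·A·g⁻¹ = B. -/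
/-- **Opposite parabolics in `SL₃(𝔽₂)` are not conjugate.** There is no `g ∈ SL₃(𝔽₂)` with
`g • A • g⁻¹ = B`, where `A = {a : a₂₁ = a₃₁ = 0}` and `B = {b : b₁₂ = b₁₃ = 0}`
(entries written 1-indexed). -/
theorem sl3_parabolics_not_conjugate (A B : Subgroup SL3F2)
    (hA : (A : Set SL3F2) =
      {a : SL3F2 | (a : Matrix (Fin 3) (Fin 3) (ZMod 2)) 1 0 = 0 ∧
        (a : Matrix (Fin 3) (Fin 3) (ZMod 2)) 2 0 = 0})
    (hB : (B : Set SL3F2) =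
      {b : SL3F2 | (b : Matrix (Fin 3) (Fin 3) (ZMod 2)) 0 1 = 0 ∧
        (b : Matrix (Fin 3) (Fin 3) (ZMod 2)) 0 2 = 0}) :
    ¬ ∃ g : SL3F2, (fun x => g * x * g⁻¹) '' (A : Set SL3F2) = (B : Set SL3F2) := by
  rintro ⟨g, h⟩
  -- key: every `b ∈ B` fixes the first column of `g`
  have key : ∀ b : SL3F2, (b : Matrix (Fin 3) (Fin 3) (ZMod 2)) 0 1 = 0 →
      (b : Matrix (Fin 3) (Fin 3) (ZMod 2)) 0 2 = 0 →
      ∀ j : Fin 3, ((b : Matrix (Fin 3) (Fin 3) (ZMod 2)) *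
          (g : Matrix (Fin 3) (Fin 3) (ZMod 2))) j 0
        = (g : Matrix (Fin 3) (Fin 3) (ZMod 2)) j 0 := by
    intro b hb1 hb2 j
    have hbB : b ∈ (B : Set SL3F2) := by rw [hB]; exact ⟨hb1, hb2⟩
    rw [← h] at hbB
    obtain ⟨a, haA, hba⟩ := hbB
    rw [hA] at haA
    obtain ⟨ha10, ha20⟩ := haA
    -- a 0 0 = 1, from det
    have hdet := a.2
    rw [Matrix.det_fin_three] at hdet
    rw [ha10, ha20] at hdet
    ring_nf at hdet
    have ha00 : (a : Matrix (Fin 3) (Fin 3) (ZMod 2)) 0 0 = 1 := by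
      have h1 : ∀ x : ZMod 2, x ≠ 0 → x = 1 := by decide
      apply h1
      intro h0
      rw [h0] at hdet
      simp at hdet
    -- b * g = g * a
    have hbg : (b : Matrix (Fin 3) (Fin 3) (ZMod 2)) * (g : Matrix (Fin 3) (Fin 3) (ZMod 2))
        = (g : Matrix (Fin 3) (Fin 3) (ZMod 2)) * (a : Matrix (Fin 3) (Fin 3) (ZMod 2)) := by
      have : b * g = g * a := by
        rw [← hba]; group
      calc (b : Matrix (Fin 3) (Fin 3) (ZMod 2)) * (g : Matrix (Fin 3) (Fin 3) (ZMod 2))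
          = ((b * g : SL3F2) : Matrix (Fin 3) (Fin 3) (ZMod 2)) := rfl
        _ = ((g * a : SL3F2) : Matrix (Fin 3) (Fin 3) (ZMod 2)) := by rw [this]
        _ = _ := rfl
    rw [hbg, Matrix.mul_apply, Fin.sum_univ_three, ha00, ha10, ha20]
    ring
  -- three specific elements of B
  set b1 : SL3F2 := ⟨!![1,0,0;1,1,0;0,0,1], by decide⟩ with hb1def
  set b2 : SL3F2 := ⟨!![1,0,0;0,1,1;0,0,1], by decide⟩ with hb2def
  set b3 : SL3F2 := ⟨!![1,0,0;0,0,1;0,1,0], by decide⟩ with hb3def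
  have k1 := key b1 (by simp [hb1def]) (by simp [hb1def]) 1
  have k2 := key b2 (by simp [hb2def]) (by simp [hb2def]) 1
  have k3 := key b3 (by simp [hb3def]) (by simp [hb3def]) 1
  rw [Matrix.mul_apply, Fin.sum_univ_three] at k1 k2 k3
  norm_num [hb1def, hb2def, hb3def, Matrix.cons_val_one, Matrix.cons_val_two, Matrix.cons_val_zero,
    Matrix.head_cons, Matrix.cons_val_fin_one, Matrix.cons_val', Matrix.empty_val'] at k1 k2 k3
  -- from k1 : g00 + g10 = g10 ⇒ g00 = 0 ; k2 : g10 + g20 = g10 ⇒ g20 = 0 ; k3 : g20 = g10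
  set x := (g : Matrix (Fin 3) (Fin 3) (ZMod 2)) 0 0
  set y := (g : Matrix (Fin 3) (Fin 3) (ZMod 2)) 1 0
  set z := (g : Matrix (Fin 3) (Fin 3) (ZMod 2)) 2 0
  have hx : x = 0 := k1
  have hz : z = 0 := k2
  have hy : y = 0 := k3.symm.trans k2
  have hdetg := g.2
  rw [Matrix.det_fin_three] at hdetg
  rw [show (g : Matrix (Fin 3) (Fin 3) (ZMod 2)) 0 0 = x from rfl,
    show (g : Matrix (Fin 3) (Fin 3) (ZMod 2)) 1 0 = y from rfl,
    show (g : Matrix (Fin 3) (Fin 3) (ZMod 2)) 2 0 = z from rfl, hx, hy, hz] at hdetg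
  ring_nf at hdetg
  simp at hdetg
end

section
/- In the symmetric group S₆ on {1,2,3,4,5,6}, the subgroups A = {id, (1 2)(3 4), (1 3)(2 4), (1 4)(2 3)} and B = {id, (1 2)(3 4), (1 2)(5 6), (3 4)(5 6)} are almost conjugate: for every g ∈ S₆, the number of elements of A conjugate in S₆ to g equals the number of elements of B conjugate in S₆ to g. -/
section
local notation "t1" => (c[0, 1] * c[2, 3] : Equiv.Perm (Fin 6))
local notation "a2" => (c[0, 2] * c[1, 3] : Equiv.Perm (Fin 6))
local notation "a3" => (c[0, 3] * c[1, 2] : Equiv.Perm (Fin 6))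
local notation "b2" => (c[0, 1] * c[4, 5] : Equiv.Perm (Fin 6))
local notation "b3" => (c[2, 3] * c[4, 5] : Equiv.Perm (Fin 6))

lemma conj_a2 : IsConj a2 t1 := isConj_iff.mpr ⟨c[1,2], by decide⟩
lemma conj_a3 : IsConj a3 t1 := isConj_iff.mpr ⟨c[1,2,3], by decide⟩
lemma conj_b2 : IsConj b2 t1 := isConj_iff.mpr ⟨c[2,4]*c[3,5], by decide⟩
lemma conj_b3 : IsConj b3 t1 := isConj_iff.mpr ⟨c[0,4,2]*c[1,5,3], by decide⟩



/-- The permutation `ρ = (1 5 3 6)(2 4)` of `{1,…,6}`, written 0-indexed on `Fin 6`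
as `(0 4 2 5)(1 3)`. -/
def rho : Equiv.Perm (Fin 6) := c[0, 4, 2, 5] * c[1, 3]

/-- The permutation `ρ' = (1 2 3 4)(5 6)` of `{1,…,6}`, written 0-indexed on `Fin 6`
as `(0 1 2 3)(4 5)`. -/
def rho' : Equiv.Perm (Fin 6) := c[0, 1, 2, 3] * c[4, 5]

/-- The Klein four-subgroup `A = {id, (1 2)(3 4), (1 3)(2 4), (1 4)(2 3)}` of `S₆`
(written 0-indexed on `Fin 6`), as a set. -/
def setA6 : Set (Equiv.Perm (Fin 6)) :=
  {1, c[0, 1] * c[2, 3], c[0, 2] * c[1, 3], c[0, 3] * c[1, 2]}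

/-- The Klein four-subgroup `B = {id, (1 2)(3 4), (1 2)(5 6), (3 4)(5 6)}` of `S₆`
(written 0-indexed on `Fin 6`), as a set. -/
def setB6 : Set (Equiv.Perm (Fin 6)) :=
  {1, c[0, 1] * c[2, 3], c[0, 1] * c[4, 5], c[2, 3] * c[4, 5]}

/-- **The two Klein four-subgroups of `S₆` are almost conjugate.** For every `g ∈ S₆`, the
number of elements of `A = {id, (1 2)(3 4), (1 3)(2 4), (1 4)(2 3)}` conjugate in `S₆` to `g`
equals the number of elements of `B = {id, (1 2)(3 4), (1 2)(5 6), (3 4)(5 6)}` conjugate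
in `S₆` to `g`. -/
theorem s6_klein_almost_conjugate (A B : Subgroup (Equiv.Perm (Fin 6)))
    (hA : (A : Set (Equiv.Perm (Fin 6))) = setA6)
    (hB : (B : Set (Equiv.Perm (Fin 6))) = setB6) :
    ∀ g : Equiv.Perm (Fin 6),
      Nat.card {a : Equiv.Perm (Fin 6) // a ∈ A ∧ IsConj a g} =
      Nat.card {b : Equiv.Perm (Fin 6) // b ∈ B ∧ IsConj b g} := by
  intro g
  have memA : ∀ a : Equiv.Perm (Fin 6), a ∈ A ↔ a ∈ setA6 := fun a => by
    rw [← SetLike.mem_coe, hA]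
  have memB : ∀ a : Equiv.Perm (Fin 6), a ∈ B ↔ a ∈ setB6 := fun a => by
    rw [← SetLike.mem_coe, hB]
  by_cases hg : g = 1
  · subst hg
    refine Nat.card_congr (Equiv.subtypeEquivRight fun a => ?_)
    have h1 : IsConj a 1 ↔ a = 1 := isConj_comm.trans isConj_one_right
    constructor
    · rintro ⟨-, h⟩
      exact ⟨(memB a).mpr (by rw [h1.mp h]; left; rfl), h⟩
    · rintro ⟨-, h⟩
      exact ⟨(memA a).mpr (by rw [h1.mp h]; left; rfl), h⟩
  · by_cases ht : IsConj t1 g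
    · have hA3 : Nat.card {a : Equiv.Perm (Fin 6) // a ∈ A ∧ IsConj a g} =
          Nat.card (({t1, a2, a3} : Set (Equiv.Perm (Fin 6))) : Type) := by
        refine Nat.card_congr (Equiv.subtypeEquivRight fun a => ?_)
        constructor
        · rintro ⟨hm, hc⟩
          rcases (memA a).mp hm with h | h | h | h
          · exact absurd (isConj_one_right.mp (by rw [h] at hc; exact hc)) hg
          · exact Or.inl h
          · exact Or.inr (Or.inl h)
          · exact Or.inr (Or.inr h)
        · rintro (h | h | h) <;> subst h
          · exact ⟨(memA _).mpr (by right; left; rfl), ht⟩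
          · exact ⟨(memA _).mpr (by right; right; left; rfl), conj_a2.trans ht⟩
          · exact ⟨(memA _).mpr (by right; right; right; rfl), conj_a3.trans ht⟩
      have hB3 : Nat.card {b : Equiv.Perm (Fin 6) // b ∈ B ∧ IsConj b g} =
          Nat.card (({t1, b2, b3} : Set (Equiv.Perm (Fin 6))) : Type) := by
        refine Nat.card_congr (Equiv.subtypeEquivRight fun a => ?_)
        constructor
        · rintro ⟨hm, hc⟩
          rcases (memB a).mp hm with h | h | h | h
          · exact absurd (isConj_one_right.mp (by rw [h] at hc; exact hc)) hg
          · exact Or.inl h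
          · exact Or.inr (Or.inl h)
          · exact Or.inr (Or.inr h)
        · rintro (h | h | h) <;> subst h
          · exact ⟨(memB _).mpr (by right; left; rfl), ht⟩
          · exact ⟨(memB _).mpr (by right; right; left; rfl), conj_b2.trans ht⟩
          · exact ⟨(memB _).mpr (by right; right; right; rfl), conj_b3.trans ht⟩
      have cA : (({t1, a2, a3} : Set (Equiv.Perm (Fin 6)))).ncard = 3 := by
        rw [Set.ncard_insert_of_notMem (by simp [Set.mem_insert_iff]; decide),
          Set.ncard_insert_of_notMem (by simp [Set.mem_singleton_iff]; decide),
          Set.ncard_singleton]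
      have cB : (({t1, b2, b3} : Set (Equiv.Perm (Fin 6)))).ncard = 3 := by
        rw [Set.ncard_insert_of_notMem (by simp [Set.mem_insert_iff]; decide),
          Set.ncard_insert_of_notMem (by simp [Set.mem_singleton_iff]; decide),
          Set.ncard_singleton]
      rw [hA3, hB3, Nat.card_coe_set_eq, Nat.card_coe_set_eq, cA, cB]
    · refine Nat.card_congr (Equiv.subtypeEquivRight fun a => iff_of_false ?_ ?_)
      · rintro ⟨hm, hc⟩
        rcases (memA a).mp hm with h | h | h | h
        · exact hg (isConj_one_right.mp (by rw [h] at hc; exact hc))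
        · exact ht (by rw [h] at hc; exact hc)
        · exact ht (conj_a2.symm.trans (by rw [h] at hc; exact hc))
        · exact ht (conj_a3.symm.trans (by rw [h] at hc; exact hc))
      · rintro ⟨hm, hc⟩
        rcases (memB a).mp hm with h | h | h | h
        · exact hg (isConj_one_right.mp (by rw [h] at hc; exact hc))
        · exact ht (by rw [h] at hc; exact hc)
        · exact ht (conj_b2.symm.trans (by rw [h] at hc; exact hc))
        · exact ht (conj_b3.symm.trans (by rw [h] at hc; exact hc))
end
end

section
/- Let A = {id, (1 2)(3 4), (1 3)(2 4), (1 4)(2 3)} ≤ S₆, and let ρ = (1 5 3 6)(2 4) and ρ′ = (1 2 3 4)(5 6) in S₆. Then for every σ ∈ S₆, it is not the case that both σρ²σ⁻¹ ∈ A and σ(ρ′)²σ⁻¹ ∈ A. Consequently, for any right coset Aσ, if the least positive n with σρⁿσ⁻¹ ∈ A equals 2 then the least positive n with σ(ρ′)ⁿσ⁻¹ ∈ A equals 4, and vice versa. -/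
lemma conj_eq_one_iff' {G} [Group G] (a b : G) : a * b * a⁻¹ = 1 ↔ b = 1 := by
  rw [mul_inv_eq_one, mul_eq_left]

lemma memA_iff (x : Equiv.Perm (Fin 6)) : x ∈ setA6 ↔
    x = 1 ∨ x = c[0,1]*c[2,3] ∨ x = c[0,2]*c[1,3] ∨ x = c[0,3]*c[1,2] := by
  simp [setA6, Set.mem_insert_iff, Set.mem_singleton_iff]

lemma sqA {x : Equiv.Perm (Fin 6)} (h : x ∈ setA6) : x ^ 2 = 1 := by
  rw [memA_iff] at h
  rcases h with h|h|h|h <;> subst h <;> decide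

lemma fixA {x : Equiv.Perm (Fin 6)} (h : x ∈ setA6) (hne : x ≠ 1) :
    ∀ i, x i = i → i = 4 ∨ i = 5 := by
  rw [memA_iff] at h
  rcases h with h|h|h|h <;> subst h
  · exact absurd rfl hne
  · decide
  · decide
  · decide

lemma conj_apply (σ x : Equiv.Perm (Fin 6)) (i : Fin 6) :
    (σ * x * σ⁻¹) (σ i) = σ (x i) := by
  simp [Equiv.Perm.mul_apply, Equiv.symm_apply_apply]

lemma main : ∀ σ : Equiv.Perm (Fin 6),
    ¬ (σ * rho ^ 2 * σ⁻¹ ∈ setA6 ∧ σ * rho' ^ 2 * σ⁻¹ ∈ setA6) := by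
  rintro σ ⟨h1, h2⟩
  have hne1 : σ * rho ^ 2 * σ⁻¹ ≠ 1 := by
    rw [Ne, conj_eq_one_iff']; decide
  have hne2 : σ * rho' ^ 2 * σ⁻¹ ≠ 1 := by
    rw [Ne, conj_eq_one_iff']; decide
  have k1 : σ 1 = 4 ∨ σ 1 = 5 := by
    refine fixA h1 hne1 (σ 1) ?_
    rw [conj_apply]; exact congrArg σ (by decide)
  have k3 : σ 3 = 4 ∨ σ 3 = 5 := by
    refine fixA h1 hne1 (σ 3) ?_
    rw [conj_apply]; exact congrArg σ (by decide)
  have k4 : σ 4 = 4 ∨ σ 4 = 5 := by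
    refine fixA h2 hne2 (σ 4) ?_
    rw [conj_apply]; exact congrArg σ (by decide)
  rcases k1 with a|a <;> rcases k3 with b|b <;> rcases k4 with c|c <;>
    first
      | exact absurd (σ.injective (a.trans b.symm)) (by decide)
      | exact absurd (σ.injective (a.trans c.symm)) (by decide)
      | exact absurd (σ.injective (b.trans c.symm)) (by decide)

lemma inf_four (σ τ : Equiv.Perm (Fin 6)) (hτ4 : τ ^ 4 = 1) (hτ2 : τ ^ 2 ≠ 1)
    (h2 : σ * τ ^ 2 * σ⁻¹ ∉ setA6) :
    sInf {n : ℕ | 0 < n ∧ σ * τ ^ n * σ⁻¹ ∈ setA6} = 4 := by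
  have h4 : (4 : ℕ) ∈ {n : ℕ | 0 < n ∧ σ * τ ^ n * σ⁻¹ ∈ setA6} := by
    refine ⟨by norm_num, ?_⟩
    rw [hτ4, mul_one, mul_inv_cancel]
    exact Set.mem_insert _ _
  have h1 : σ * τ ^ 1 * σ⁻¹ ∉ setA6 := by
    intro h
    have := sqA h
    rw [conj_pow] at this
    rw [conj_eq_one_iff'] at this
    exact hτ2 (by rw [← pow_mul] at this; simpa using this)
  have h3 : σ * τ ^ 3 * σ⁻¹ ∉ setA6 := by
    intro h
    have := sqA h
    rw [conj_pow, conj_eq_one_iff', ← pow_mul] at this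
    have h6 : τ ^ 6 = τ ^ 2 := by
      calc τ ^ 6 = τ ^ 4 * τ ^ 2 := by rw [← pow_add]
      _ = τ ^ 2 := by rw [hτ4, one_mul]
    exact hτ2 (by rw [show 3*2 = 6 from rfl, h6] at this; exact this)
  refine le_antisymm (Nat.sInf_le h4) (le_csInf ⟨4, h4⟩ ?_)
  rintro m ⟨hm0, hmA⟩
  by_contra hlt
  push_neg at hlt
  interval_cases m
  · exact h1 hmA
  · exact h2 hmA
  · exact h3 hmA

/-- **Conjugates of `ρ²` and `(ρ')²` cannot both lie in `A`.** For every `σ ∈ S₆`, it is not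
the case that both `σρ²σ⁻¹ ∈ A` and `σ(ρ')²σ⁻¹ ∈ A`. Consequently, for each `σ` (the
conditions depending only on the right coset `Aσ`), if the least positive `n` with
`σρⁿσ⁻¹ ∈ A` equals `2` then the least positive `n` with `σ(ρ')ⁿσ⁻¹ ∈ A` equals `4`,
and vice versa. -/
theorem s6_A_not_both_degree_two :
    ∀ σ : Equiv.Perm (Fin 6),
      (¬ (σ * rho ^ 2 * σ⁻¹ ∈ setA6 ∧ σ * rho' ^ 2 * σ⁻¹ ∈ setA6)) ∧
      ((sInf {n : ℕ | 0 < n ∧ σ * rho ^ n * σ⁻¹ ∈ setA6} = 2 →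
          sInf {n : ℕ | 0 < n ∧ σ * rho' ^ n * σ⁻¹ ∈ setA6} = 4) ∧
        (sInf {n : ℕ | 0 < n ∧ σ * rho' ^ n * σ⁻¹ ∈ setA6} = 2 →
          sInf {n : ℕ | 0 < n ∧ σ * rho ^ n * σ⁻¹ ∈ setA6} = 4)) := by
  intro σ
  refine ⟨main σ, ?_, ?_⟩
  · intro hs
    have hne : {n : ℕ | 0 < n ∧ σ * rho ^ n * σ⁻¹ ∈ setA6}.Nonempty := by
      by_contra h
      rw [Set.not_nonempty_iff_eq_empty] at h
      rw [h, Nat.sInf_empty] at hs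
      exact two_ne_zero hs.symm
    have hmem := Nat.sInf_mem hne
    rw [hs] at hmem
    exact inf_four σ rho' (by decide) (by decide) fun h => main σ ⟨hmem.2, h⟩
  · intro hs
    have hne : {n : ℕ | 0 < n ∧ σ * rho' ^ n * σ⁻¹ ∈ setA6}.Nonempty := by
      by_contra h
      rw [Set.not_nonempty_iff_eq_empty] at h
      rw [h, Nat.sInf_empty] at hs
      exact two_ne_zero hs.symm
    have hmem := Nat.sInf_mem hne
    rw [hs] at hmem
    exact inf_four σ rho (by decide) (by decide) fun h => main σ ⟨h, hmem.2⟩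
end

section
/- Let B = {id, (1 2)(3 4), (1 2)(5 6), (3 4)(5 6)} ≤ S₆, and let ρ = (1 5 3 6)(2 4) and ρ′ = (1 2 3 4)(5 6) in S₆. Then for every τ ∈ S₆, one has τρ²τ⁻¹ ∈ B if and only if τ(ρ′)²τ⁻¹ ∈ B. Consequently, for every right coset Bτ, the least positive n with τρⁿτ⁻¹ ∈ B equals the least positive n with τ(ρ′)ⁿτ⁻¹ ∈ B. -/
/-- The partition of `Fin 6` into the support blocks of `B`. -/
def P6 : Finset (Finset (Fin 6)) := {{0,1},{2,3},{4,5}}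

set_option maxRecDepth 4000 in
lemma keyK : ∀ a b c d : Fin 6, a ≠ b → c ≠ d → a ≠ c → a ≠ d → b ≠ c → b ≠ d →
    ((Equiv.swap a b * Equiv.swap c d = 1 ∨
      Equiv.swap a b * Equiv.swap c d = Equiv.swap 0 1 * Equiv.swap 2 3 ∨
      Equiv.swap a b * Equiv.swap c d = Equiv.swap 0 1 * Equiv.swap 4 5 ∨
      Equiv.swap a b * Equiv.swap c d = Equiv.swap 2 3 * Equiv.swap 4 5) ↔
     (({a,b} : Finset (Fin 6)) ∈ P6 ∧ ({c,d} : Finset (Fin 6)) ∈ P6)) := by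
  decide

set_option maxRecDepth 10000 in
lemma blockK : ∀ s1 s2 : Finset (Fin 6), s1 ∈ P6 → s2 ∈ P6 → s1 ≠ s2 →
    Finset.univ \ (s1 ∪ s2) ∈ P6 := by decide

lemma third_block (τ : Equiv.Perm (Fin 6)) :
    ({τ 1, τ 3} : Finset (Fin 6)) = Finset.univ \ (({τ 0, τ 2} : Finset (Fin 6)) ∪ {τ 4, τ 5}) := by
  ext x
  obtain ⟨i, rfl⟩ := τ.surjective x
  simp only [Finset.mem_insert, Finset.mem_singleton, Finset.mem_sdiff, Finset.mem_univ,
    Finset.mem_union, true_and, EmbeddingLike.apply_eq_iff_eq]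
  revert i; decide

lemma third_block' (τ : Equiv.Perm (Fin 6)) :
    ({τ 4, τ 5} : Finset (Fin 6)) = Finset.univ \ (({τ 0, τ 2} : Finset (Fin 6)) ∪ {τ 1, τ 3}) := by
  ext x
  obtain ⟨i, rfl⟩ := τ.surjective x
  simp only [Finset.mem_insert, Finset.mem_singleton, Finset.mem_sdiff, Finset.mem_univ,
    Finset.mem_union, true_and, EmbeddingLike.apply_eq_iff_eq]
  revert i; decide

lemma setB6_mem_iff (x : Equiv.Perm (Fin 6)) :
    x ∈ setB6 ↔ (x = 1 ∨ x = Equiv.swap 0 1 * Equiv.swap 2 3 ∨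
      x = Equiv.swap 0 1 * Equiv.swap 4 5 ∨ x = Equiv.swap 2 3 * Equiv.swap 4 5) := by
  have h1 : (c[0, 1] * c[2, 3] : Equiv.Perm (Fin 6)) = Equiv.swap 0 1 * Equiv.swap 2 3 := by decide
  have h2 : (c[0, 1] * c[4, 5] : Equiv.Perm (Fin 6)) = Equiv.swap 0 1 * Equiv.swap 4 5 := by decide
  have h3 : (c[2, 3] * c[4, 5] : Equiv.Perm (Fin 6)) = Equiv.swap 2 3 * Equiv.swap 4 5 := by decide
  simp only [setB6, Set.mem_insert_iff, Set.mem_singleton_iff, h1, h2, h3]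

/-- Conjugate of a product of two swaps. -/
lemma conj_two_swaps (τ : Equiv.Perm (Fin 6)) (a b c d : Fin 6) :
    τ * (Equiv.swap a b * Equiv.swap c d) * τ⁻¹ =
      Equiv.swap (τ a) (τ b) * Equiv.swap (τ c) (τ d) := by
  rw [Equiv.swap_apply_apply, Equiv.swap_apply_apply]
  group

/-- The conjugate of a square lies in `B` iff the two image pairs are blocks of `P6`. -/
lemma cond_iff (τ : Equiv.Perm (Fin 6)) (a b c d : Fin 6)
    (hab : a ≠ b) (hcd : c ≠ d) (hac : a ≠ c) (had : a ≠ d) (hbc : b ≠ c) (hbd : b ≠ d) :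
    τ * (Equiv.swap a b * Equiv.swap c d) * τ⁻¹ ∈ setB6 ↔
      (({τ a, τ b} : Finset (Fin 6)) ∈ P6 ∧ ({τ c, τ d} : Finset (Fin 6)) ∈ P6) := by
  rw [conj_two_swaps, setB6_mem_iff]
  exact keyK (τ a) (τ b) (τ c) (τ d) (τ.injective.ne hab) (τ.injective.ne hcd)
    (τ.injective.ne hac) (τ.injective.ne had) (τ.injective.ne hbc) (τ.injective.ne hbd)

lemma sInf_eq_two {S : Set ℕ} (h2 : 2 ∈ S) (h1 : 1 ∉ S) (h0 : 0 ∉ S) : sInf S = 2 := by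
  have hmem := Nat.sInf_mem ⟨2, h2⟩
  have hle := Nat.sInf_le h2
  have h0' : sInf S ≠ 0 := fun h => h0 (h ▸ hmem)
  have h1' : sInf S ≠ 1 := fun h => h1 (h ▸ hmem)
  omega

lemma sInf_eq_four {S : Set ℕ} (h4 : 4 ∈ S) (h : ∀ n < 4, n ∉ S) : sInf S = 4 := by
  have hmem := Nat.sInf_mem ⟨4, h4⟩
  have hle := Nat.sInf_le h4
  have : ¬ sInf S < 4 := fun hl => h _ hl hmem
  omega

/-- **For `B`, conjugates of `ρ²` and `(ρ')²` lie in `B` simultaneously.** For every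
`τ ∈ S₆`, `τρ²τ⁻¹ ∈ B` if and only if `τ(ρ')²τ⁻¹ ∈ B`, where
`B = {id, (1 2)(3 4), (1 2)(5 6), (3 4)(5 6)}`. Consequently, for every `τ` (the conditions
depending only on the right coset `Bτ`), the least positive `n` with `τρⁿτ⁻¹ ∈ B` equals the
least positive `n` with `τ(ρ')ⁿτ⁻¹ ∈ B`. -/
theorem s6_B_same_degree :
    ∀ τ : Equiv.Perm (Fin 6),
      (τ * rho ^ 2 * τ⁻¹ ∈ setB6 ↔ τ * rho' ^ 2 * τ⁻¹ ∈ setB6) ∧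
      sInf {n : ℕ | 0 < n ∧ τ * rho ^ n * τ⁻¹ ∈ setB6} =
        sInf {n : ℕ | 0 < n ∧ τ * rho' ^ n * τ⁻¹ ∈ setB6} := by
  have hr2 : rho ^ 2 = Equiv.swap 0 2 * Equiv.swap 4 5 := by decide
  have hr2' : rho' ^ 2 = Equiv.swap 0 2 * Equiv.swap 1 3 := by decide
  intro τ
  -- the main iff
  have hiff : τ * rho ^ 2 * τ⁻¹ ∈ setB6 ↔ τ * rho' ^ 2 * τ⁻¹ ∈ setB6 := by
    rw [hr2, hr2',
      cond_iff τ 0 2 4 5 (by decide) (by decide) (by decide) (by decide) (by decide) (by decide),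
      cond_iff τ 0 2 1 3 (by decide) (by decide) (by decide) (by decide) (by decide) (by decide)]
    have hne45 : ({τ 0, τ 2} : Finset (Fin 6)) ≠ {τ 4, τ 5} := by
      intro h
      have : τ 0 ∈ ({τ 4, τ 5} : Finset (Fin 6)) := h ▸ Finset.mem_insert_self _ _
      simp only [Finset.mem_insert, Finset.mem_singleton,
        EmbeddingLike.apply_eq_iff_eq] at this
      exact absurd this (by decide)
    have hne13 : ({τ 0, τ 2} : Finset (Fin 6)) ≠ {τ 1, τ 3} := by
      intro h
      have : τ 0 ∈ ({τ 1, τ 3} : Finset (Fin 6)) := h ▸ Finset.mem_insert_self _ _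
      simp only [Finset.mem_insert, Finset.mem_singleton,
        EmbeddingLike.apply_eq_iff_eq] at this
      exact absurd this (by decide)
    constructor
    · rintro ⟨h02, h45⟩
      refine ⟨h02, ?_⟩
      rw [third_block τ]
      exact blockK _ _ h02 h45 hne45
    · rintro ⟨h02, h13⟩
      refine ⟨h02, ?_⟩
      rw [third_block' τ]
      exact blockK _ _ h02 h13 hne13
  refine ⟨hiff, ?_⟩
  -- squares of elements of B are 1
  have hBsq : ∀ x ∈ setB6, x * x = 1 := by
    intro x hx
    rw [setB6_mem_iff] at hx
    rcases hx with rfl | rfl | rfl | rfl <;> decide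
  have key : ∀ a : Equiv.Perm (Fin 6), a * a ≠ 1 → τ * a * τ⁻¹ ∉ setB6 := by
    intro a ha hmem
    apply ha
    have h1 : (τ * a * τ⁻¹) * (τ * a * τ⁻¹) = 1 := hBsq _ hmem
    have h2 : τ * (a * a) * τ⁻¹ = 1 := by
      rw [← h1]; group
    have h3 := congrArg (fun z => τ⁻¹ * z * τ) h2
    simpa [mul_assoc] using h3
  have hone : (1 : Equiv.Perm (Fin 6)) ∈ setB6 := Set.mem_insert _ _
  have h4mem : ∀ σ : Equiv.Perm (Fin 6), σ ^ 4 = 1 →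
      (4 : ℕ) ∈ {n : ℕ | 0 < n ∧ τ * σ ^ n * τ⁻¹ ∈ setB6} := by
    intro σ h
    refine ⟨by norm_num, ?_⟩
    rw [h, mul_one, mul_inv_cancel]
    exact hone
  have h1not : ∀ σ : Equiv.Perm (Fin 6), σ * σ ≠ 1 →
      (1 : ℕ) ∉ {n : ℕ | 0 < n ∧ τ * σ ^ n * τ⁻¹ ∈ setB6} := by
    intro σ h hmem
    rw [Set.mem_setOf_eq, pow_one] at hmem
    exact key σ h hmem.2
  have h3not : ∀ σ : Equiv.Perm (Fin 6), σ ^ 3 * σ ^ 3 ≠ 1 →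
      (3 : ℕ) ∉ {n : ℕ | 0 < n ∧ τ * σ ^ n * τ⁻¹ ∈ setB6} := by
    intro σ h hmem
    exact key (σ ^ 3) h hmem.2
  have h0not : ∀ σ : Equiv.Perm (Fin 6),
      (0 : ℕ) ∉ {n : ℕ | 0 < n ∧ τ * σ ^ n * τ⁻¹ ∈ setB6} := by
    intro σ hmem
    exact absurd hmem.1 (by norm_num)
  by_cases hc : τ * rho ^ 2 * τ⁻¹ ∈ setB6
  · have hc' : τ * rho' ^ 2 * τ⁻¹ ∈ setB6 := hiff.mp hc
    have hm2 : (2 : ℕ) ∈ {n : ℕ | 0 < n ∧ τ * rho ^ n * τ⁻¹ ∈ setB6} := ⟨by norm_num, hc⟩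
    have hm2' : (2 : ℕ) ∈ {n : ℕ | 0 < n ∧ τ * rho' ^ n * τ⁻¹ ∈ setB6} := ⟨by norm_num, hc'⟩
    rw [sInf_eq_two hm2 (h1not rho (by decide)) (h0not rho),
      sInf_eq_two hm2' (h1not rho' (by decide)) (h0not rho')]
  · have hc' : τ * rho' ^ 2 * τ⁻¹ ∉ setB6 := fun h => hc (hiff.mpr h)
    rw [sInf_eq_four (h4mem rho (by decide)) ?_, sInf_eq_four (h4mem rho' (by decide)) ?_]
    · intro n hn
      interval_cases n
      · exact h0not rho'
      · exact h1not rho' (by decide)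
      · exact fun h => hc' h.2
      · exact h3not rho' (by set_option maxRecDepth 10000 in decide)
    · intro n hn
      interval_cases n
      · exact h0not rho
      · exact h1not rho (by decide)
      · exact fun h => hc h.2
      · exact h3not rho (by set_option maxRecDepth 10000 in decide)
end
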